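/- For m ≥ 2, a word w lies outside the support of the free Lie algebra L_{ℤ_m}(A) over ℤ/mℤ if and only if m divides c(w), equivalently if and only if every coefficient of the integer polynomial l*(w) is divisible by m. -/

import Mathlib

open MonoidAlgebra

attribute [local instance 100] LieRing.ofAssociativeRing

/-- The word `w` viewed as a monomial in the free associative algebra `K⟨A⟩`. -/
noncomputable def word (K : Type*) [CommRing K] {A : Type*} (w : List A) :
    MonoidAlgebra K (FreeMonoid A) :=
  MonoidAlgebra.single (FreeMonoid.ofList w) 1

/-- The adjoint `l*` of the left-normed Lie bracketing, defined by the recursion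
`l*(ε) = 0`, `l*(a) = a`, `l*(aub) = l*(au)·b − l*(ub)·a`. -/
noncomputable def lstar (K : Type*) [CommRing K] {A : Type*} :
    List A → MonoidAlgebra K (FreeMonoid A)
  | [] => 0
  | [a] => word K [a]
  | a :: b :: r =>
      lstar K (a :: (b :: r).dropLast) * word K [(b :: r).getLast (by simp)]
        - lstar K (b :: r) * word K [a]
  termination_by w => w.length
  decreasing_by
    · simp [List.length_dropLast]
    · simp

/-- The free Lie algebra `L_K(A)`: the Lie subalgebra of `K⟨A⟩` generated by the letters. -/
noncomputable def freeLie (K : Type*) [CommRing K] (A : Type*) :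
    LieSubalgebra K (MonoidAlgebra K (FreeMonoid A)) :=
  LieSubalgebra.lieSpan K _ {P | ∃ a : A, P = word K [a]}

namespace Aux6

variable {A : Type*}

/-- Left-normed Lie bracketing, on reversed words. -/
noncomputable def lbr : List A → MonoidAlgebra ℤ (FreeMonoid A)
  | [] => 0
  | [a] => word ℤ [a]
  | a :: b :: t => ⁅lbr (b :: t), word ℤ [a]⁆

/-- Left-normed Lie bracketing `l(v)`. -/
noncomputable def lbrack (v : List A) : MonoidAlgebra ℤ (FreeMonoid A) := lbr v.reverse

lemma lbrack_nil : lbrack ([] : List A) = 0 := rfl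

lemma lbrack_singleton (a : A) : lbrack [a] = word ℤ [a] := rfl

lemma lbrack_concat (v : List A) (hv : v ≠ []) (c : A) :
    lbrack (v ++ [c]) = ⁅lbrack v, word ℤ [c]⁆ := by
  unfold lbrack
  rw [List.reverse_append]
  obtain ⟨d, t, hdt⟩ : ∃ d t, v.reverse = d :: t := by
    cases h : v.reverse with
    | nil => exact absurd (by simpa using congrArg List.reverse h) hv
    | cons d t => exact ⟨d, t, rfl⟩
  rw [hdt]
  rfl

lemma lbr_mem_freeLie : ∀ t : List A, lbr t ∈ freeLie ℤ A
  | [] => by rw [show lbr ([] : List A) = 0 from rfl]; exact (freeLie ℤ A).zero_mem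
  | [a] => LieSubalgebra.subset_lieSpan ⟨a, rfl⟩
  | a :: b :: t =>
      (freeLie ℤ A).lie_mem (lbr_mem_freeLie (b :: t))
        (LieSubalgebra.subset_lieSpan ⟨a, rfl⟩)

lemma lbrack_mem_freeLie (v : List A) : lbrack v ∈ freeLie ℤ A := lbr_mem_freeLie _

/-! Coefficient lemmas -/

lemma coeff_mul_word_concat (f : MonoidAlgebra ℤ (FreeMonoid A)) (c : A) (v : List A) :
    (f * word ℤ [c]).coeff (FreeMonoid.ofList (v ++ [c])) = f.coeff (FreeMonoid.ofList v) := by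
  have H : ∀ d : FreeMonoid A,
      d * FreeMonoid.ofList [c] = FreeMonoid.ofList (v ++ [c]) ↔ d = FreeMonoid.ofList v := by
    intro d
    constructor
    · intro h
      have h' : FreeMonoid.toList d ++ [c] = v ++ [c] := congrArg FreeMonoid.toList h
      exact congrArg FreeMonoid.ofList (List.append_left_injective [c] h')
    · intro hd
      rw [hd]
      exact (FreeMonoid.ofList_append v [c]).symm
  rw [word, MonoidAlgebra.mul_single_apply_aux _ (fun d _ => H d), mul_one]

lemma coeff_mul_word_ne (f : MonoidAlgebra ℤ (FreeMonoid A)) (c : A) (v : List A)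
    (h : ∀ u, v ≠ u ++ [c]) :
    (f * word ℤ [c]).coeff (FreeMonoid.ofList v) = 0 := by
  rw [word]
  apply MonoidAlgebra.mul_single_apply_of_not_exists_mul
  rintro ⟨d, hd⟩
  exact h (FreeMonoid.toList d) (congrArg FreeMonoid.toList hd)

lemma coeff_word_mul_cons (f : MonoidAlgebra ℤ (FreeMonoid A)) (c : A) (v : List A) :
    (word ℤ [c] * f).coeff (FreeMonoid.ofList (c :: v)) = f.coeff (FreeMonoid.ofList v) := by
  have H : ∀ d : FreeMonoid A,
      FreeMonoid.ofList [c] * d = FreeMonoid.ofList (c :: v) ↔ d = FreeMonoid.ofList v := by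
    intro d
    constructor
    · intro h
      have h' : c :: FreeMonoid.toList d = c :: v := congrArg FreeMonoid.toList h
      exact congrArg FreeMonoid.ofList (List.cons_eq_cons.mp h').2
    · intro hd
      rw [hd]
      rfl
  rw [word, MonoidAlgebra.single_mul_apply_aux _ (fun d _ => H d), one_mul]

lemma coeff_word_mul_ne (f : MonoidAlgebra ℤ (FreeMonoid A)) (c : A) (v : List A)
    (h : ∀ u, v ≠ c :: u) :
    (word ℤ [c] * f).coeff (FreeMonoid.ofList v) = 0 := by
  rw [word]
  apply MonoidAlgebra.single_mul_apply_of_not_exists_mul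
  rintro ⟨d, hd⟩
  exact h (FreeMonoid.toList d) (congrArg FreeMonoid.toList hd)

lemma concat_eq_concat {u t : List A} {c d : A} (h : u ++ [c] = t ++ [d]) : c = d := by
  have := (List.append_inj' h rfl).2
  simpa using this

lemma word_apply_ne (x : List A) (y : List A) (h : x ≠ y) :
    (word ℤ x).coeff (FreeMonoid.ofList y) = 0 := by
  rw [word]
  apply Finsupp.single_eq_of_ne'
  intro hxy
  exact h (congrArg FreeMonoid.toList hxy)

lemma lbr_apply_one : ∀ t : List A, (lbr t).coeff (1 : FreeMonoid A) = 0
  | [] => rfl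
  | [a] => by
      rw [show lbr [a] = word ℤ [a] from rfl,
        show (1 : FreeMonoid A) = FreeMonoid.ofList [] from rfl]
      exact word_apply_ne _ _ (by simp)
  | a :: b :: t => by
      rw [show lbr (a :: b :: t) = ⁅lbr (b :: t), word ℤ [a]⁆ from rfl, Ring.lie_def,
        MonoidAlgebra.coeff_sub, Finsupp.sub_apply, show (1 : FreeMonoid A) = FreeMonoid.ofList [] from rfl,
        coeff_mul_word_ne _ _ _ (by simp), coeff_word_mul_ne _ _ _ (by simp), sub_zero]

lemma lbrack_apply_one (v : List A) : (lbrack v).coeff (1 : FreeMonoid A) = 0 := lbr_apply_one _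

lemma lbrack_nil_apply (x : FreeMonoid A) : (lbrack ([] : List A)).coeff x = 0 := by
  rw [lbrack_nil]; rfl

/-- Adjointness: the coefficient of `v` in `l*(w)` equals the coefficient of `w` in `l(v)`. -/
lemma adjoint : ∀ (n : ℕ) (w : List A), w.length ≤ n → ∀ v : List A,
    (lstar ℤ w).coeff (FreeMonoid.ofList v) = (lbrack v).coeff (FreeMonoid.ofList w)
  | 0, w, hw, v => by
      have hwnil : w = [] := List.length_eq_zero_iff.mp (Nat.le_zero.mp hw)
      subst hwnil
      rw [lstar, show FreeMonoid.ofList ([] : List A) = 1 from rfl, lbrack_apply_one]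
      rfl
  | n + 1, [], hw, v => by
      rw [lstar, show FreeMonoid.ofList ([] : List A) = 1 from rfl, lbrack_apply_one]
      rfl
  | n + 1, [a], hw, v => by
      classical
      rw [lstar]
      rcases List.eq_nil_or_concat' v with rfl | ⟨u, c, rfl⟩
      · rw [lbrack_nil_apply, show FreeMonoid.ofList ([] : List A) = 1 from rfl]
        rw [show (1 : FreeMonoid A) = FreeMonoid.ofList ([] : List A) from rfl]
        exact word_apply_ne _ _ (by simp)
      rcases eq_or_ne u [] with rfl | hu
      · -- v = [c]
        rw [List.nil_append, lbrack_singleton]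
        by_cases hac : a = c
        · subst hac; rfl
        · rw [word_apply_ne _ _ (by simpa using hac),
            word_apply_ne _ _ (by simpa using (Ne.symm hac))]
      · -- v = u ++ [c] with u ≠ []; both sides are 0
        rw [word_apply_ne _ _ (by
          intro h
          rcases u with _ | ⟨x, xs⟩
          · exact hu rfl
          · have := congrArg List.length h
            simp at this)]
        rw [lbrack_concat u hu c, Ring.lie_def, MonoidAlgebra.coeff_sub, Finsupp.sub_apply]
        have h1 : (lbrack u * word ℤ [c]).coeff (FreeMonoid.ofList [a]) = 0 := by
          by_cases hca : c = a
          · subst hca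
            have h := coeff_mul_word_concat (lbrack u) c []
            rw [List.nil_append] at h
            rw [h]
            exact lbrack_apply_one u
          · refine coeff_mul_word_ne _ _ _ (fun t h => ?_)
            exact hca (concat_eq_concat (show t ++ [c] = [] ++ [a] by simpa using h.symm))
        have h2 : (word ℤ [c] * lbrack u).coeff (FreeMonoid.ofList [a]) = 0 := by
          by_cases hca : c = a
          · subst hca
            have h := coeff_word_mul_cons (lbrack u) c []
            rw [h]
            exact lbrack_apply_one u
          · refine coeff_word_mul_ne _ _ _ (fun t h => ?_)
            exact hca (List.cons_eq_cons.mp h).1.symm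
        rw [h1, h2, sub_zero]
  | n + 1, a :: b :: r, hw, v => by
      classical
      have hlen : (a :: (b :: r).dropLast).length ≤ n := by
        simp only [List.length_cons, List.length_dropLast] at *
        omega
      have hlen2 : (b :: r).length ≤ n := by
        simp only [List.length_cons] at *
        omega
      rw [lstar, MonoidAlgebra.coeff_sub, Finsupp.sub_apply]
      set lst : A := (b :: r).getLast (by simp) with hlst
      set dL : List A := a :: (b :: r).dropLast with hdL
      have hsplit : dL ++ [lst] = a :: b :: r := by
        rw [hdL, hlst, List.cons_append, List.dropLast_append_getLast]
      rcases List.eq_nil_or_concat' v with rfl | ⟨u, c, rfl⟩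
      · rw [lbrack_nil_apply,
          coeff_mul_word_ne _ _ _ (by simp), coeff_mul_word_ne _ _ _ (by simp), sub_zero]
      have hT1 : (lstar ℤ dL * word ℤ [lst]).coeff (FreeMonoid.ofList (u ++ [c])) =
          if c = lst then (lbrack u).coeff (FreeMonoid.ofList dL) else 0 := by
        by_cases hc : c = lst
        · rw [if_pos hc, hc, coeff_mul_word_concat, adjoint n dL hlen u]
        · rw [if_neg hc]
          exact coeff_mul_word_ne _ _ _ (fun t h => hc (concat_eq_concat h))
      have hT2 : (lstar ℤ (b :: r) * word ℤ [a]).coeff (FreeMonoid.ofList (u ++ [c])) =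
          if c = a then (lbrack u).coeff (FreeMonoid.ofList (b :: r)) else 0 := by
        by_cases hc : c = a
        · rw [if_pos hc, hc, coeff_mul_word_concat, adjoint n (b :: r) hlen2 u]
        · rw [if_neg hc]
          exact coeff_mul_word_ne _ _ _ (fun t h => hc (concat_eq_concat h))
      rw [hT1, hT2]
      rcases eq_or_ne u [] with rfl | hu
      · rw [List.nil_append, lbrack_singleton,
          word_apply_ne _ _ (by intro h; have := congrArg List.length h; simp at this)]
        simp [lbrack_nil_apply]
      · rw [lbrack_concat u hu c, Ring.lie_def, MonoidAlgebra.coeff_sub, Finsupp.sub_apply]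
        have hR1 : (lbrack u * word ℤ [c]).coeff (FreeMonoid.ofList (a :: b :: r)) =
            if c = lst then (lbrack u).coeff (FreeMonoid.ofList dL) else 0 := by
          by_cases hc : c = lst
          · rw [if_pos hc, hc, show (a :: b :: r) = dL ++ [lst] from hsplit.symm,
              coeff_mul_word_concat]
          · rw [if_neg hc]
            refine coeff_mul_word_ne _ _ _ (fun t h => hc ?_)
            rw [← hsplit] at h
            exact (concat_eq_concat h).symm
        have hR2 : (word ℤ [c] * lbrack u).coeff (FreeMonoid.ofList (a :: b :: r)) =
            if c = a then (lbrack u).coeff (FreeMonoid.ofList (b :: r)) else 0 := by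
          by_cases hc : c = a
          · rw [if_pos hc, hc, show (a :: b :: r) = a :: (b :: r) from rfl]
            subst hc
            exact coeff_word_mul_cons (lbrack u) c (b :: r)
          · rw [if_neg hc]
            exact coeff_word_mul_ne _ _ _
              (fun t h => hc (List.cons_eq_cons.mp h).1.symm)
        rw [hR1, hR2]

/-! The span of the left-normed bracketings. -/

noncomputable def spanS (A : Type*) : Submodule ℤ (MonoidAlgebra ℤ (FreeMonoid A)) :=
  Submodule.span ℤ {P | ∃ v : List A, P = lbrack v}

lemma bracket_word_mem {x : MonoidAlgebra ℤ (FreeMonoid A)} (hx : x ∈ spanS A) (c : A) :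
    ⁅x, word ℤ [c]⁆ ∈ spanS A := by
  induction hx using Submodule.span_induction with
  | mem P hP =>
      obtain ⟨v, rfl⟩ := hP
      rcases eq_or_ne v [] with rfl | hv
      · rw [lbrack_nil, zero_lie]; exact (spanS A).zero_mem
      · rw [← lbrack_concat v hv c]
        exact Submodule.subset_span ⟨v ++ [c], rfl⟩
  | zero => rw [zero_lie]; exact (spanS A).zero_mem
  | add a b _ _ ha hb => rw [add_lie]; exact (spanS A).add_mem ha hb
  | smul n a _ ha => rw [smul_lie]; exact (spanS A).smul_mem n ha

lemma lie_lbrack_mem : ∀ (n : ℕ) (u v : List A), v.length ≤ n →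
    ⁅lbrack u, lbrack v⁆ ∈ spanS A
  | 0, u, v, hv => by
      have : v = [] := List.length_eq_zero_iff.mp (Nat.le_zero.mp hv)
      subst this
      rw [lbrack_nil, lie_zero]; exact (spanS A).zero_mem
  | n + 1, u, v, hv => by
      rcases List.eq_nil_or_concat' v with rfl | ⟨t, c, rfl⟩
      · rw [lbrack_nil, lie_zero]; exact (spanS A).zero_mem
      rcases eq_or_ne t [] with rfl | ht
      · rw [List.nil_append, lbrack_singleton]
        exact bracket_word_mem (Submodule.subset_span ⟨u, rfl⟩) c
      · have hlt : t.length ≤ n := by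
          have := hv; simp only [List.length_append, List.length_cons] at this ⊢; omega
        rw [lbrack_concat t ht c, leibniz_lie]
        refine (spanS A).add_mem ?_ ?_
        · exact bracket_word_mem (lie_lbrack_mem n u t hlt) c
        · rcases eq_or_ne u [] with rfl | hu
          · rw [lbrack_nil, zero_lie, lie_zero]; exact (spanS A).zero_mem
          · rw [← lbrack_concat u hu c, ← lie_skew]
            exact (spanS A).neg_mem (lie_lbrack_mem n (u ++ [c]) t hlt)

lemma spanS_lie_mem {x y : MonoidAlgebra ℤ (FreeMonoid A)}
    (hx : x ∈ spanS A) (hy : y ∈ spanS A) : ⁅x, y⁆ ∈ spanS A := by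
  induction hx using Submodule.span_induction with
  | mem P hP =>
      obtain ⟨u, rfl⟩ := hP
      induction hy using Submodule.span_induction with
      | mem Q hQ =>
          obtain ⟨v, rfl⟩ := hQ
          exact lie_lbrack_mem v.length u v le_rfl
      | zero => rw [lie_zero]; exact (spanS A).zero_mem
      | add a b _ _ ha hb => rw [lie_add]; exact (spanS A).add_mem ha hb
      | smul n a _ ha => rw [lie_smul]; exact (spanS A).smul_mem n ha
  | zero => rw [zero_lie]; exact (spanS A).zero_mem
  | add a b _ _ ha hb => rw [add_lie]; exact (spanS A).add_mem ha hb
  | smul n a _ ha => rw [smul_lie]; exact (spanS A).smul_mem n ha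

noncomputable def spanSL (A : Type*) : LieSubalgebra ℤ (MonoidAlgebra ℤ (FreeMonoid A)) :=
  { spanS A with lie_mem' := fun hx hy => spanS_lie_mem hx hy }

lemma freeLie_le_spanS {P : MonoidAlgebra ℤ (FreeMonoid A)} (hP : P ∈ freeLie ℤ A) :
    P ∈ spanS A := by
  have : freeLie ℤ A ≤ spanSL A := by
    rw [freeLie, LieSubalgebra.lieSpan_le]
    rintro Q ⟨a, rfl⟩
    exact Submodule.subset_span ⟨[a], rfl⟩
  exact this hP

/-! The reduction map mod `m`. -/

noncomputable def F (m : ℕ) (A : Type*) :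
    MonoidAlgebra ℤ (FreeMonoid A) →+* MonoidAlgebra (ZMod m) (FreeMonoid A) :=
  MonoidAlgebra.liftNCRingHom
    (MonoidAlgebra.singleOneRingHom.comp (Int.castRingHom (ZMod m)))
    (MonoidAlgebra.of (ZMod m) (FreeMonoid A))
    (fun r x => by
      show MonoidAlgebra.single (1 : FreeMonoid A) ((r : ZMod m)) * MonoidAlgebra.single x 1 =
        MonoidAlgebra.single x 1 * MonoidAlgebra.single (1 : FreeMonoid A) ((r : ZMod m))
      rw [MonoidAlgebra.single_mul_single, MonoidAlgebra.single_mul_single, one_mul, mul_one,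
        one_mul, mul_one])

lemma F_single (m : ℕ) (x : FreeMonoid A) (r : ℤ) :
    F m A (MonoidAlgebra.single x r) = MonoidAlgebra.single x ((r : ZMod m)) := by
  show (MonoidAlgebra.liftNC
      ((MonoidAlgebra.singleOneRingHom.comp (Int.castRingHom (ZMod m)) :
        ℤ →+* MonoidAlgebra (ZMod m) (FreeMonoid A)) : ℤ →+ MonoidAlgebra (ZMod m) (FreeMonoid A))
      ⇑(MonoidAlgebra.of (ZMod m) (FreeMonoid A))) (MonoidAlgebra.single x r)
      = MonoidAlgebra.single x ((r : ZMod m))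
  rw [MonoidAlgebra.liftNC_single]
  show MonoidAlgebra.single (1 : FreeMonoid A) ((r : ZMod m)) * MonoidAlgebra.single x 1 = _
  rw [MonoidAlgebra.single_mul_single, one_mul, mul_one]

lemma F_apply (m : ℕ) (P : MonoidAlgebra ℤ (FreeMonoid A)) (x : FreeMonoid A) :
    (F m A P).coeff x = ((P.coeff x : ℤ) : ZMod m) := by
  induction P using MonoidAlgebra.induction_linear with
  | zero => simp
  | add f g hf hg => rw [map_add, MonoidAlgebra.coeff_add, MonoidAlgebra.coeff_add,
      Finsupp.add_apply, Finsupp.add_apply, hf, hg, Int.cast_add]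
  | single a b =>
      rw [F_single]
      classical
      rw [MonoidAlgebra.coeff_single, MonoidAlgebra.coeff_single, Finsupp.single_apply, Finsupp.single_apply, apply_ite (Int.cast : ℤ → ZMod m),
        Int.cast_zero]

lemma F_word (m : ℕ) (l : List A) : F m A (word ℤ l) = word (ZMod m) l := by
  rw [word, word, F_single, Int.cast_one]

lemma F_lie (m : ℕ) (p q : MonoidAlgebra ℤ (FreeMonoid A)) :
    F m A ⁅p, q⁆ = ⁅F m A p, F m A q⁆ := by
  rw [Ring.lie_def, Ring.lie_def, map_sub, map_mul, map_mul]

lemma F_mem (m : ℕ) {P : MonoidAlgebra ℤ (FreeMonoid A)} (hP : P ∈ freeLie ℤ A) :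
    F m A P ∈ freeLie (ZMod m) A := by
  let C : LieSubalgebra ℤ (MonoidAlgebra ℤ (FreeMonoid A)) :=
    { carrier := {p | F m A p ∈ freeLie (ZMod m) A}
      add_mem' := fun {a b} ha hb => by
        simp only [Set.mem_setOf_eq, map_add] at *
        exact (freeLie (ZMod m) A).add_mem ha hb
      zero_mem' := by
        simp only [Set.mem_setOf_eq, map_zero]
        exact (freeLie (ZMod m) A).zero_mem
      smul_mem' := fun n p hp => by
        simp only [Set.mem_setOf_eq] at *
        rw [map_zsmul, ← Int.cast_smul_eq_zsmul (ZMod m)]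
        exact (freeLie (ZMod m) A).smul_mem _ hp
      lie_mem' := fun {a b} ha hb => by
        simp only [Set.mem_setOf_eq] at *
        rw [F_lie]
        exact (freeLie (ZMod m) A).lie_mem ha hb }
  have : freeLie ℤ A ≤ C := by
    rw [freeLie, LieSubalgebra.lieSpan_le]
    rintro Q ⟨a, rfl⟩
    show F m A (word ℤ [a]) ∈ freeLie (ZMod m) A
    rw [F_word]
    exact LieSubalgebra.subset_lieSpan ⟨a, rfl⟩
  exact this hP

lemma F_surj (m : ℕ) {Q : MonoidAlgebra (ZMod m) (FreeMonoid A)}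
    (hQ : Q ∈ freeLie (ZMod m) A) : ∃ P ∈ freeLie ℤ A, F m A P = Q := by
  let D : LieSubalgebra (ZMod m) (MonoidAlgebra (ZMod m) (FreeMonoid A)) :=
    { carrier := {q | ∃ p ∈ freeLie ℤ A, F m A p = q}
      add_mem' := fun {a b} ha hb => by
        obtain ⟨p, hp, rfl⟩ := ha
        obtain ⟨p', hp', rfl⟩ := hb
        exact ⟨p + p', (freeLie ℤ A).add_mem hp hp', map_add _ _ _⟩
      zero_mem' := ⟨0, (freeLie ℤ A).zero_mem, map_zero _⟩
      smul_mem' := fun r q hq => by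
        obtain ⟨p, hp, rfl⟩ := hq
        obtain ⟨n, rfl⟩ := ZMod.intCast_surjective r
        refine ⟨n • p, (freeLie ℤ A).smul_mem n hp, ?_⟩
        rw [map_zsmul, Int.cast_smul_eq_zsmul]
      lie_mem' := fun {a b} ha hb => by
        obtain ⟨p, hp, rfl⟩ := ha
        obtain ⟨p', hp', rfl⟩ := hb
        exact ⟨⁅p, p'⁆, (freeLie ℤ A).lie_mem hp hp', F_lie m p p'⟩ }
  have : freeLie (ZMod m) A ≤ D := by
    rw [freeLie, LieSubalgebra.lieSpan_le]
    rintro Q ⟨a, rfl⟩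
    exact ⟨word ℤ [a], LieSubalgebra.subset_lieSpan ⟨a, rfl⟩, F_word m [a]⟩
  exact this hQ

/-- The submodule of polynomials whose coefficient at `w` is divisible by `m`. -/
noncomputable def evalDvd (m : ℕ) (w : List A) :
    Submodule ℤ (MonoidAlgebra ℤ (FreeMonoid A)) where
  carrier := {P | (m : ℤ) ∣ P.coeff (FreeMonoid.ofList w)}
  add_mem' := fun {a b} ha hb => by
    simp only [Set.mem_setOf_eq, MonoidAlgebra.coeff_add, Finsupp.add_apply] at *
    exact dvd_add ha hb
  zero_mem' := by simp
  smul_mem' := fun n P hP => by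
    simp only [Set.mem_setOf_eq, MonoidAlgebra.coeff_smul, Finsupp.smul_apply, smul_eq_mul] at *
    exact hP.mul_left n

end Aux6

open Aux6 in
/-- for `m ≥ 2`, a word `w` lies outside the support of `L_{ℤ/m}(A)`
iff `m ∣ c(w)`, equivalently iff `m` divides every coefficient of the integer
polynomial `l*(w)`. -/
theorem not_mem_support_zmod_iff {A : Type*} [Fintype A] (m : ℕ) (hm : 2 ≤ m)
    (w : List A) (c : ℤ) (hc0 : 0 ≤ c)
    (hgen : ∀ k : ℤ, (∃ Q ∈ freeLie ℤ A, Q.coeff (FreeMonoid.ofList w) = k) ↔ c ∣ k) :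
    ((∀ Q ∈ freeLie (ZMod m) A, Q.coeff (FreeMonoid.ofList w) = 0) ↔ (m : ℤ) ∣ c) ∧
    ((∀ Q ∈ freeLie (ZMod m) A, Q.coeff (FreeMonoid.ofList w) = 0) ↔
      ∀ v : FreeMonoid A, (m : ℤ) ∣ (lstar ℤ w).coeff v) := by
  have key1 : (∀ Q ∈ freeLie (ZMod m) A, Q.coeff (FreeMonoid.ofList w) = 0) ↔
      (∀ P ∈ freeLie ℤ A, (m : ℤ) ∣ P.coeff (FreeMonoid.ofList w)) := by
    constructor
    · intro h P hP
      have := h (F m A P) (F_mem m hP)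
      rw [F_apply] at this
      exact (ZMod.intCast_zmod_eq_zero_iff_dvd _ m).mp this
    · intro h Q hQ
      obtain ⟨P, hP, rfl⟩ := F_surj m hQ
      rw [F_apply]
      exact (ZMod.intCast_zmod_eq_zero_iff_dvd _ m).mpr (h P hP)
  have key2 : (∀ P ∈ freeLie ℤ A, (m : ℤ) ∣ P.coeff (FreeMonoid.ofList w)) ↔ (m : ℤ) ∣ c := by
    constructor
    · intro h
      obtain ⟨Q, hQ, hQc⟩ := (hgen c).mpr dvd_rfl
      exact hQc ▸ h Q hQ
    · intro hmc P hP
      exact dvd_trans hmc ((hgen _).mp ⟨P, hP, rfl⟩)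
  have key3 : (∀ P ∈ freeLie ℤ A, (m : ℤ) ∣ P.coeff (FreeMonoid.ofList w)) ↔
      (∀ v : FreeMonoid A, (m : ℤ) ∣ (lstar ℤ w).coeff v) := by
    constructor
    · intro h v
      rw [← FreeMonoid.ofList_toList v, adjoint w.length w le_rfl (FreeMonoid.toList v)]
      exact h _ (lbrack_mem_freeLie _)
    · intro h P hP
      have hsub : spanS A ≤ evalDvd m w := by
        rw [spanS, Submodule.span_le]
        rintro Q ⟨v, rfl⟩
        show (m : ℤ) ∣ (lbrack v).coeff (FreeMonoid.ofList w)
        rw [← adjoint w.length w le_rfl v]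
        exact h (FreeMonoid.ofList v)
      exact hsub (freeLie_le_spanS hP)
  exact ⟨key1.trans key2, key1.trans key3⟩
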